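/- Let X be a real Hilbert space, F : X → X a monotone operator, and suppose the Lavrentiev-type variational source condition ⟨x† − x̄, x† − x⟩ ≤ β‖x − x†‖² + φ(⟨F(x) − F(x†), x − x†⟩) holds for all x ∈ M, where β ∈ [0,1), φ is an index function extended by φ(0) = 0, M ⊆ X, and F(x†) = y. Let f : (0,∞) → (0,∞) be an index function mapping (0,∞) onto (0,∞), set f̃(s) := ∫₀^s f(t) dt, and assume f̃(φ(s)) ≤ s for all s > 0. Let G : (0,∞) → (0,∞) satisfy G(α) ≥ ∫₀^α f⁻¹(τ) dτ and set Ψ(α) := G(α)/α. Then for every δ > 0, α > 0, yδ ∈ X with ‖y − yδ‖ ≤ δ, and every xαδ ∈ M satisfying F(xαδ) + α(xαδ − x̄) = yδ, one has ‖xαδ − x†‖² ≤ δ²/((1 − β)² α²) + (2/(1 − β)) Ψ(α). -/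

import Mathlib

open RealInnerProductSpace Filter

section YoungAux
open MeasureTheory Set

/-- Interval integral from 0 of a function zeroed out on `(-∞,0]` agrees with that of `f`. -/
lemma integral_ite_zero_eq (f : ℝ → ℝ) (u : ℝ) (hu : 0 < u) :
    (∫ t in (0:ℝ)..u, (if t ≤ 0 then 0 else f t)) = ∫ t in (0:ℝ)..u, f t := by
  rw [intervalIntegral.integral_of_le hu.le, intervalIntegral.integral_of_le hu.le]
  apply setIntegral_congr_fun measurableSet_Ioc
  intro t ht
  simp [not_le.mpr ht.1]

/-- Young's inequality for a monotone function `f` vanishing on `(-∞,0]` and a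
"pseudo-inverse" `g`, proved by a Fubini/area argument. -/
lemma young_aux (f g : ℝ → ℝ) (hf : Monotone f) (hg : Monotone g)
    (hfnn : ∀ t, 0 ≤ f t) (hgnn : ∀ t, 0 ≤ g t)
    (hdual : ∀ t τ : ℝ, 0 < t → 0 < τ → f t < τ → t ≤ g τ)
    (u α : ℝ) (hu : 0 < u) (hα : 0 < α) :
    α * u ≤ (∫ t in (0:ℝ)..u, f t) + ∫ τ in (0:ℝ)..α, g τ := by
  set A : Set (ℝ × ℝ) := (Ioo 0 u ×ˢ Ioo 0 α) ∩ {p : ℝ × ℝ | p.2 ≤ f p.1} with hA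
  set B : Set (ℝ × ℝ) := (Ioo 0 u ×ˢ Ioo 0 α) ∩ {p : ℝ × ℝ | p.1 ≤ g p.2} with hB
  have hAmeas : MeasurableSet A :=
    (measurableSet_Ioo.prod measurableSet_Ioo).inter
      (measurableSet_le measurable_snd (hf.measurable.comp measurable_fst))
  have hBmeas : MeasurableSet B :=
    (measurableSet_Ioo.prod measurableSet_Ioo).inter
      (measurableSet_le measurable_fst (hg.measurable.comp measurable_snd))
  have hsub : (Ioo (0:ℝ) u) ×ˢ (Ioo (0:ℝ) α) ⊆ A ∪ B := by
    rintro ⟨t, τ⟩ hp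
    rcases hp with ⟨ht, hτ⟩
    by_cases h : τ ≤ f t
    · exact Or.inl ⟨⟨ht, hτ⟩, h⟩
    · exact Or.inr ⟨⟨ht, hτ⟩, hdual t τ ht.1 hτ.1 (lt_of_not_ge h)⟩
  have hfint : IntervalIntegrable f volume 0 u := hf.intervalIntegrable
  have hgint : IntervalIntegrable g volume 0 α := hg.intervalIntegrable
  have hfint' : IntegrableOn f (Ioo 0 u) volume :=
    (hfint.1.mono_set Ioo_subset_Ioc_self)
  have hgint' : IntegrableOn g (Ioo 0 α) volume :=
    (hgint.1.mono_set Ioo_subset_Ioc_self)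
  have hAvol : volume A ≤ ENNReal.ofReal (∫ t in (0:ℝ)..u, f t) := by
    rw [Measure.volume_eq_prod, Measure.prod_apply hAmeas]
    have hle : ∀ t : ℝ, volume (Prod.mk t ⁻¹' A) ≤
        (Ioo (0:ℝ) u).indicator (fun t => ENNReal.ofReal (f t)) t := by
      intro t
      by_cases ht : t ∈ Ioo (0:ℝ) u
      · have : Prod.mk t ⁻¹' A ⊆ Ioc 0 (f t) := by
          rintro τ ⟨⟨-, hτ⟩, hle⟩
          exact ⟨hτ.1, hle⟩
        calc volume (Prod.mk t ⁻¹' A) ≤ volume (Ioc (0:ℝ) (f t)) := measure_mono this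
          _ = ENNReal.ofReal (f t - 0) := Real.volume_Ioc
          _ = (Ioo (0:ℝ) u).indicator (fun t => ENNReal.ofReal (f t)) t := by
              rw [Set.indicator_of_mem ht]; norm_num
      · have : Prod.mk t ⁻¹' A = ∅ := by
          ext τ; simp only [Set.mem_preimage, Set.mem_empty_iff_false, iff_false]
          rintro ⟨⟨ht', -⟩, -⟩; exact ht ht'
        rw [this, Set.indicator_of_notMem ht]; simp
    calc ∫⁻ t, volume (Prod.mk t ⁻¹' A) ≤
        ∫⁻ t, (Ioo (0:ℝ) u).indicator (fun t => ENNReal.ofReal (f t)) t :=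
          lintegral_mono hle
      _ = ∫⁻ t in Ioo (0:ℝ) u, ENNReal.ofReal (f t) :=
          lintegral_indicator measurableSet_Ioo _
      _ = ENNReal.ofReal (∫ t in Ioo (0:ℝ) u, f t) := by
          rw [← ofReal_integral_eq_lintegral_ofReal hfint'
            (Filter.Eventually.of_forall fun t => hfnn t)]
      _ = ENNReal.ofReal (∫ t in (0:ℝ)..u, f t) := by
          rw [intervalIntegral.integral_of_le hu.le, integral_Ioc_eq_integral_Ioo]
  have hBvol : volume B ≤ ENNReal.ofReal (∫ τ in (0:ℝ)..α, g τ) := by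
    rw [Measure.volume_eq_prod, Measure.prod_apply_symm hBmeas]
    have hle : ∀ τ : ℝ, volume ((fun t => (t, τ)) ⁻¹' B) ≤
        (Ioo (0:ℝ) α).indicator (fun τ => ENNReal.ofReal (g τ)) τ := by
      intro τ
      by_cases hτ : τ ∈ Ioo (0:ℝ) α
      · have : (fun t => (t, τ)) ⁻¹' B ⊆ Ioc 0 (g τ) := by
          rintro t ⟨⟨ht, -⟩, hle⟩
          exact ⟨ht.1, hle⟩
        calc volume ((fun t => (t, τ)) ⁻¹' B) ≤ volume (Ioc (0:ℝ) (g τ)) := measure_mono this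
          _ = ENNReal.ofReal (g τ - 0) := Real.volume_Ioc
          _ = (Ioo (0:ℝ) α).indicator (fun τ => ENNReal.ofReal (g τ)) τ := by
              rw [Set.indicator_of_mem hτ]; norm_num
      · have : (fun t => (t, τ)) ⁻¹' B = ∅ := by
          ext t; simp only [Set.mem_preimage, Set.mem_empty_iff_false, iff_false]
          rintro ⟨⟨-, hτ'⟩, -⟩; exact hτ hτ'
        rw [this, Set.indicator_of_notMem hτ]; simp
    calc ∫⁻ τ, volume ((fun t => (t, τ)) ⁻¹' B) ≤
        ∫⁻ τ, (Ioo (0:ℝ) α).indicator (fun τ => ENNReal.ofReal (g τ)) τ :=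
          lintegral_mono hle
      _ = ∫⁻ τ in Ioo (0:ℝ) α, ENNReal.ofReal (g τ) :=
          lintegral_indicator measurableSet_Ioo _
      _ = ENNReal.ofReal (∫ τ in Ioo (0:ℝ) α, g τ) := by
          rw [← ofReal_integral_eq_lintegral_ofReal hgint'
            (Filter.Eventually.of_forall fun τ => hgnn τ)]
      _ = ENNReal.ofReal (∫ τ in (0:ℝ)..α, g τ) := by
          rw [intervalIntegral.integral_of_le hα.le, integral_Ioc_eq_integral_Ioo]
  have hrect : ENNReal.ofReal (α * u) = volume ((Ioo (0:ℝ) u) ×ˢ (Ioo (0:ℝ) α)) := by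
    rw [Measure.volume_eq_prod, Measure.prod_prod, Real.volume_Ioo, Real.volume_Ioo,
      ← ENNReal.ofReal_mul (by linarith)]
    ring_nf
  have hfin : ENNReal.ofReal (α * u) ≤
      ENNReal.ofReal ((∫ t in (0:ℝ)..u, f t) + ∫ τ in (0:ℝ)..α, g τ) := by
    rw [hrect]
    calc volume ((Ioo (0:ℝ) u) ×ˢ (Ioo (0:ℝ) α)) ≤ volume (A ∪ B) := measure_mono hsub
      _ ≤ volume A + volume B := measure_union_le A B
      _ ≤ ENNReal.ofReal (∫ t in (0:ℝ)..u, f t) + ENNReal.ofReal (∫ τ in (0:ℝ)..α, g τ) :=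
          add_le_add hAvol hBvol
      _ = ENNReal.ofReal ((∫ t in (0:ℝ)..u, f t) + ∫ τ in (0:ℝ)..α, g τ) := by
          rw [ENNReal.ofReal_add
            (intervalIntegral.integral_nonneg hu.le fun t _ => hfnn t)
            (intervalIntegral.integral_nonneg hα.le fun τ _ => hgnn τ)]
  have h1 : (0:ℝ) ≤ (∫ t in (0:ℝ)..u, f t) + ∫ τ in (0:ℝ)..α, g τ :=
    add_nonneg (intervalIntegral.integral_nonneg hu.le fun t _ => hfnn t)
      (intervalIntegral.integral_nonneg hα.le fun τ _ => hgnn τ)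
  exact (ENNReal.ofReal_le_ofReal_iff h1).mp hfin

end YoungAux

/-- Error estimate for Lavrentiev regularization under the Lavrentiev-specific variational
source condition (Theorem 3.2, estimate (estim1_Lavr)):
‖x_α^δ − x†‖² ≤ δ²/((1−β)²α²) + (2/(1−β)) Ψ(α) with Ψ(α) = G(α)/α, where the index
function f (with inverse g on (0,∞)) satisfies f̃(φ(s)) ≤ s for the antiderivative f̃ of f,
and G(α) ≥ ∫₀^α f⁻¹(τ) dτ. -/
theorem stmt_12 {X : Type*} [NormedAddCommGroup X] [InnerProductSpace ℝ X] [CompleteSpace X]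
    (F : X → X) (hmono : ∀ x x' : X, 0 ≤ ⟪F x - F x', x - x'⟫)
    (y xbar xdag : X) (hsol : F xdag = y)
    (β : ℝ) (hβ0 : 0 ≤ β) (hβ1 : β < 1)
    (φ : ℝ → ℝ) (hφcont : ContinuousOn φ (Set.Ioi 0))
    (hφmono : StrictMonoOn φ (Set.Ioi 0)) (hφpos : ∀ t > (0:ℝ), 0 < φ t)
    (hφ0 : Tendsto φ (nhdsWithin 0 (Set.Ioi 0)) (nhds 0)) (hφzero : φ 0 = 0)
    (M : Set X)
    (hvsc : ∀ x ∈ M,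
      ⟪xdag - xbar, xdag - x⟫ ≤ β * ‖x - xdag‖ ^ 2 + φ ⟪F x - F xdag, x - xdag⟫)
    (f g : ℝ → ℝ) (hfcont : ContinuousOn f (Set.Ioi 0))
    (hfmono : StrictMonoOn f (Set.Ioi 0)) (hfpos : ∀ t > (0:ℝ), 0 < f t)
    (hf0 : Tendsto f (nhdsWithin 0 (Set.Ioi 0)) (nhds 0))
    (hfsurj : Set.Ioi (0:ℝ) ⊆ f '' Set.Ioi 0)
    (hg : ∀ t > (0:ℝ), g (f t) = t) (hg' : ∀ t > (0:ℝ), f (g t) = t)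
    (hftilde : ∀ s > (0:ℝ), (∫ t in (0:ℝ)..(φ s), f t) ≤ s)
    (G : ℝ → ℝ) (hG : ∀ α > (0:ℝ), (∫ τ in (0:ℝ)..α, g τ) ≤ G α)
    (δ α : ℝ) (hδ : 0 < δ) (hα : 0 < α) (yδ : X) (hnoise : ‖y - yδ‖ ≤ δ)
    (xad : X) (hxadM : xad ∈ M) (hlav : F xad + α • (xad - xbar) = yδ) :
    ‖xad - xdag‖ ^ 2 ≤
      δ ^ 2 / ((1 - β) ^ 2 * α ^ 2) + (2 / (1 - β)) * (G α / α) := by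
  -- representation of g on positive reals
  have hgval : ∀ τ : ℝ, 0 < τ → ∃ a : ℝ, 0 < a ∧ f a = τ ∧ g τ = a := by
    intro τ hτ
    obtain ⟨a, ha, hfa⟩ := hfsurj hτ
    exact ⟨a, ha, hfa, by rw [← hfa, hg a ha]⟩
  have hgpos : ∀ τ : ℝ, 0 < τ → 0 < g τ := by
    intro τ hτ
    obtain ⟨a, ha, -, hga⟩ := hgval τ hτ
    rw [hga]; exact ha
  -- truncated versions of f and g
  set f0 : ℝ → ℝ := fun t => if t ≤ 0 then 0 else f t with hf0def
  set g0 : ℝ → ℝ := fun t => if t ≤ 0 then 0 else g t with hg0def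
  have hf0mono : Monotone f0 := by
    intro s t hst
    simp only [hf0def]
    by_cases hs : s ≤ 0
    · rw [if_pos hs]
      by_cases ht : t ≤ 0
      · rw [if_pos ht]
      · rw [if_neg ht]; exact (hfpos t (lt_of_not_ge ht)).le
    · have hs' : 0 < s := lt_of_not_ge hs
      have ht' : 0 < t := lt_of_lt_of_le hs' hst
      rw [if_neg hs, if_neg (not_le.mpr ht')]
      exact (hfmono.le_iff_le hs' ht').mpr hst
  have hg0mono : Monotone g0 := by
    intro s t hst
    simp only [hg0def]
    by_cases hs : s ≤ 0
    · rw [if_pos hs]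
      by_cases ht : t ≤ 0
      · rw [if_pos ht]
      · rw [if_neg ht]; exact (hgpos t (lt_of_not_ge ht)).le
    · have hs' : 0 < s := lt_of_not_ge hs
      have ht' : 0 < t := lt_of_lt_of_le hs' hst
      rw [if_neg hs, if_neg (not_le.mpr ht')]
      obtain ⟨a, ha, hfa, hga⟩ := hgval s hs'
      obtain ⟨b, hb, hfb, hgb⟩ := hgval t ht'
      rw [hga, hgb]
      refine (hfmono.le_iff_le ha hb).mp ?_
      rw [hfa, hfb]; exact hst
  have hf0nn : ∀ t, 0 ≤ f0 t := by
    intro t; simp only [hf0def]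
    by_cases ht : t ≤ 0
    · rw [if_pos ht]
    · rw [if_neg ht]; exact (hfpos t (lt_of_not_ge ht)).le
  have hg0nn : ∀ t, 0 ≤ g0 t := by
    intro t; simp only [hg0def]
    by_cases ht : t ≤ 0
    · rw [if_pos ht]
    · rw [if_neg ht]; exact (hgpos t (lt_of_not_ge ht)).le
  have hdual : ∀ t τ : ℝ, 0 < t → 0 < τ → f0 t < τ → t ≤ g0 τ := by
    intro t τ ht hτ hlt
    obtain ⟨a, ha, hfa, hga⟩ := hgval τ hτ
    simp only [hf0def, if_neg (not_le.mpr ht)] at hlt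
    simp only [hg0def, if_neg (not_le.mpr hτ), hga]
    by_contra hcon
    have : a < t := lt_of_not_ge hcon
    have := hfmono ha ht this
    rw [hfa] at this
    linarith
  -- abbreviations
  set E : ℝ := ‖xad - xdag‖ with hE
  set s : ℝ := ⟪F xad - F xdag, xad - xdag⟫ with hs
  have hs0 : 0 ≤ s := hmono xad xdag
  have hEnn : 0 ≤ E := norm_nonneg _
  -- basic identity from the Lavrentiev equation
  have heq : yδ - y = (F xad - F xdag) + α • (xad - xbar) := by
    rw [← hlav, ← hsol]; abel
  have hinner : ⟪yδ - y, xad - xdag⟫ = s + α * ⟪xad - xbar, xad - xdag⟫ := by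
    rw [heq, inner_add_left, real_inner_smul_left]
  have hexp : ⟪xad - xbar, xad - xdag⟫ = E ^ 2 - ⟪xdag - xbar, xdag - xad⟫ := by
    have h1 : xad - xbar = (xad - xdag) + (xdag - xbar) := by abel
    have h2 : xad - xdag = -(xdag - xad) := by abel
    rw [h1, inner_add_left, real_inner_self_eq_norm_sq]
    rw [show ⟪xdag - xbar, xad - xdag⟫ = -⟪xdag - xbar, xdag - xad⟫ by
      rw [h2, inner_neg_right]]
    ring
  have hcs : ⟪yδ - y, xad - xdag⟫ ≤ δ * E := by
    calc ⟪yδ - y, xad - xdag⟫ ≤ ‖yδ - y‖ * ‖xad - xdag‖ := real_inner_le_norm _ _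
      _ ≤ δ * E := by
          rw [norm_sub_rev] at hnoise
          exact mul_le_mul_of_nonneg_right hnoise (norm_nonneg _)
  have hvsc' : ⟪xdag - xbar, xdag - xad⟫ ≤ β * E ^ 2 + φ s := hvsc xad hxadM
  -- main inequality
  have hmain : (1 - β) * α * E ^ 2 ≤ δ * E + (α * φ s - s) := by
    have h1 : s + α * (E ^ 2 - ⟪xdag - xbar, xdag - xad⟫) ≤ δ * E := by
      rw [← hexp, ← hinner]; exact hcs
    nlinarith [mul_le_mul_of_nonneg_left hvsc' hα.le]
  -- Young's inequality step
  have hGnn : (0:ℝ) ≤ G α := by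
    have h1 : (∫ τ in (0:ℝ)..α, g τ) = ∫ τ in (0:ℝ)..α, g0 τ :=
      (integral_ite_zero_eq g α hα).symm
    have h2 : (0:ℝ) ≤ ∫ τ in (0:ℝ)..α, g0 τ :=
      intervalIntegral.integral_nonneg hα.le fun τ _ => hg0nn τ
    linarith [hG α hα]
  have hkey : α * φ s - s ≤ G α := by
    rcases eq_or_lt_of_le hs0 with h | h
    · rw [← h, hφzero]; simpa using hGnn
    · have hφs : 0 < φ s := hφpos s h
      have hy := young_aux f0 g0 hf0mono hg0mono hf0nn hg0nn hdual (φ s) α hφs hα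
      rw [integral_ite_zero_eq f (φ s) hφs, integral_ite_zero_eq g α hα] at hy
      have := hftilde s h
      have := hG α hα
      linarith
  have hfinal : (1 - β) * α * E ^ 2 ≤ δ * E + G α := by linarith
  -- algebra
  set c : ℝ := (1 - β) * α with hc
  have hcpos : 0 < c := mul_pos (by linarith) hα
  have h2 : c ^ 2 * E ^ 2 ≤ δ ^ 2 + 2 * c * G α := by
    nlinarith [sq_nonneg (c * E - δ), mul_le_mul_of_nonneg_left hfinal hcpos.le]
  have h3 : E ^ 2 ≤ (δ ^ 2 + 2 * c * G α) / c ^ 2 := by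
    rw [le_div_iff₀ (by positivity)]
    nlinarith
  have h4 : (δ ^ 2 + 2 * c * G α) / c ^ 2 =
      δ ^ 2 / ((1 - β) ^ 2 * α ^ 2) + (2 / (1 - β)) * (G α / α) := by
    rw [hc]
    have hβ : (1 : ℝ) - β ≠ 0 := by linarith
    have hα' : α ≠ 0 := ne_of_gt hα
    field_simp
  rw [← h4]
  exact h3
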